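/- Let R be a commutative semilocal integral domain (a domain with only finitely many maximal ideals) and let Λ be a module-finite R-algebra. Let M and N be finitely generated Λ-modules which are torsion-free as R-modules. Then M is isomorphic to N as Λ-modules if and only if M_𝔪 is isomorphic to N_𝔪 (as Λ_𝔪-modules) for every maximal ideal 𝔪 of R. -/

import Mathlib

open scoped TensorProduct

universe u


section Aux
variable (R : Type*) [CommRing R]
    (Λ : Type*) [Ring Λ] [Algebra R Λ]
    (M : Type*) [AddCommGroup M] [Module R M] [Module Λ M] [IsScalarTower R Λ M]
    (N : Type*) [AddCommGroup N] [Module R N] [Module Λ N] [IsScalarTower R Λ N]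
    (P : Ideal R) [P.IsMaximal]

/-- The canonical `Λ`-linear map `M → M ⊗[R] R_P`. -/
noncomputable def iot : M →ₗ[Λ] M ⊗[R] Localization.AtPrime P where
  toFun x := x ⊗ₜ 1
  map_add' x y := by simp [TensorProduct.add_tmul]
  map_smul' l x := by simp [TensorProduct.smul_tmul']

instance isLoc : IsLocalizedModule P.primeCompl ((iot R Λ M P).restrictScalars R) := by
  have h1 : IsLocalizedModule P.primeCompl
      (TensorProduct.mk R (Localization.AtPrime P) M 1) :=
    (isLocalizedModule_iff_isBaseChange P.primeCompl _ _).mpr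
      (TensorProduct.isBaseChange R M _)
  have : ((iot R Λ M P).restrictScalars R) =
      (TensorProduct.comm R (Localization.AtPrime P) M).toLinearMap ∘ₗ
        (TensorProduct.mk R (Localization.AtPrime P) M 1) := by ext x; rfl
  rw [this]
  exact IsLocalizedModule.of_linearEquiv _ _ _

lemma iot_inj [NoZeroSMulDivisors R M] : Function.Injective (iot R Λ M P) := by
  intro x y h
  have h' : ((iot R Λ M P).restrictScalars R) x = ((iot R Λ M P).restrictScalars R) y := h
  obtain ⟨c, hc⟩ := IsLocalizedModule.exists_of_eq (S := P.primeCompl) h'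
  have hc0 : (c : R) ≠ 0 := fun h0 => c.2 (h0 ▸ P.zero_mem)
  have h2 := sub_eq_zero.mpr hc
  rw [← smul_sub] at h2
  rcases NoZeroSMulDivisors.eq_zero_or_eq_zero_of_smul_eq_zero (R := R) (M := M) h2 with h3 | h3
  · exact absurd h3 hc0
  · exact sub_eq_zero.mp h3

lemma exists_clear [Module.Finite R M] [NoZeroSMulDivisors R N]
    (φ : (M ⊗[R] Localization.AtPrime P) ≃ₗ[Λ] (N ⊗[R] Localization.AtPrime P)) :
    ∃ (g : M →ₗ[Λ] N) (s : P.primeCompl), ∀ x : M,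
      iot R Λ N P (g x) = (s : R) • φ (iot R Λ M P x) := by
  classical
  obtain ⟨t, ht⟩ := Module.Finite.fg_top (R := R) (M := M)
  choose pr hpr using fun y => IsLocalizedModule.surj (S := P.primeCompl)
    (f := (iot R Λ N P).restrictScalars R) (y := y)
  set s : P.primeCompl := ∏ x ∈ t, (pr (φ (iot R Λ M P x))).2 with hs
  set G : M →ₗ[Λ] N ⊗[R] Localization.AtPrime P :=
    (s : R) • (φ.toLinearMap ∘ₗ iot R Λ M P) with hG
  have hrange : ∀ x : M, G x ∈ LinearMap.range (iot R Λ N P) := by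
    have hq : ⊤ ≤ Submodule.comap (G.restrictScalars R)
        (LinearMap.range ((iot R Λ N P).restrictScalars R)) := by
      rw [← ht, Submodule.span_le]
      intro x hx
      simp only [SetLike.mem_coe, Submodule.mem_comap, LinearMap.mem_range]
      have hfac : (s : R) = (∏ y ∈ t.erase x, ((pr (φ (iot R Λ M P y))).2 : R)) *
          ((pr (φ (iot R Λ M P x))).2 : R) := by
        rw [hs, ← Finset.prod_erase_mul (h := hx)]
        push_cast
        rfl
      have hGx : G x = (s : R) • φ (iot R Λ M P x) := by
        simp [hG]
      simp only [LinearMap.coe_restrictScalars]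
      rw [hGx, hfac, mul_smul]
      have h2 := hpr (φ (iot R Λ M P x))
      rw [Submonoid.smul_def] at h2
      refine ⟨(∏ y ∈ t.erase x, ((pr (φ (iot R Λ M P y))).2 : R)) •
        (pr (φ (iot R Λ M P x))).1, ?_⟩
      show ((iot R Λ N P).restrictScalars R) _ = _
      rw [map_smul, h2]
    intro x
    obtain ⟨n, hn⟩ := hq (Submodule.mem_top (x := x))
    exact ⟨n, hn⟩
  have hinj := iot_inj R Λ N P
  let eN : N ≃ₗ[Λ] LinearMap.range (iot R Λ N P) :=
    LinearEquiv.ofInjective _ hinj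
  refine ⟨eN.symm.toLinearMap ∘ₗ (G.codRestrict _ hrange), s, fun x => ?_⟩
  have : iot R Λ N P (eN.symm (G.codRestrict _ hrange x)) =
      ((eN (eN.symm (G.codRestrict _ hrange x))) : _) := rfl
  simp only [LinearMap.coe_comp, LinearEquiv.coe_coe, Function.comp_apply]
  rw [this, LinearEquiv.apply_symm_apply]
  simp [hG]


lemma local_bij [Module.Finite R M] [Module.Finite R N]
    (φ : (M ⊗[R] Localization.AtPrime P) ≃ₗ[Λ] (N ⊗[R] Localization.AtPrime P))
    (g0 : M →ₗ[Λ] N) (s : P.primeCompl)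
    (hg : ∀ x, iot R Λ N P (g0 x) = (s : R) • φ (iot R Λ M P x))
    (c0 : R) (hc0 : c0 ∈ P.primeCompl)
    (F' : M →ₗ[R] N) (hF' : F' ∈ P • (⊤ : Submodule R (M →ₗ[R] N))) :
    Function.Bijective (IsLocalizedModule.map P.primeCompl
      ((iot R Λ M P).restrictScalars R) ((iot R Λ N P).restrictScalars R)
      (c0 • g0.restrictScalars R + F')) := by
  classical
  set Rₚ := Localization.AtPrime P
  set LM := LocalizedModule P.primeCompl M
  set LN := LocalizedModule P.primeCompl N
  set ιM := (iot R Λ M P).restrictScalars R with hιM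
  set ιN := (iot R Λ N P).restrictScalars R with hιN
  set eM : LM ≃ₗ[R] M ⊗[R] Rₚ := IsLocalizedModule.iso P.primeCompl ιM with heM
  set eN : LN ≃ₗ[R] N ⊗[R] Rₚ := IsLocalizedModule.iso P.primeCompl ιN with heN
  set Fmap := IsLocalizedModule.map P.primeCompl ιM ιN with hFmap
  -- conjugation linear map
  set conjL : ((M ⊗[R] Rₚ) →ₗ[R] (N ⊗[R] Rₚ)) →ₗ[R] (LM →ₗ[R] LN) :=
    { toFun := fun h => eN.symm.toLinearMap ∘ₗ h ∘ₗ eM.toLinearMap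
      map_add' := fun a b => by ext x; simp
      map_smul' := fun r a => by ext x; simp } with hconjL
  set G : LM →ₗ[R] LN := conjL (Fmap (c0 • g0.restrictScalars R + F')) with hGdef
  suffices hG : Function.Bijective G by
    have hfun : ∀ z, Fmap (c0 • g0.restrictScalars R + F') z = eN (G (eM.symm z)) := by
      intro z
      simp [hGdef, hconjL]
    have : ⇑(Fmap (c0 • g0.restrictScalars R + F')) =
        ⇑eN ∘ ⇑G ∘ ⇑eM.symm := funext hfun
    rw [this]
    exact eN.bijective.comp (hG.comp eM.symm.bijective)
  -- the localized equivalence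
  set Ψ : LM ≃ₗ[R] LN := (eM.trans (φ.restrictScalars R)).trans eN.symm with hΨ
  -- identify the main part
  have hkey : conjL (Fmap (g0.restrictScalars R)) = (s : R) • Ψ.toLinearMap := by
    apply IsLocalizedModule.ext P.primeCompl
      (LocalizedModule.mkLinearMap P.primeCompl M)
      (IsLocalizedModule.map_units (LocalizedModule.mkLinearMap P.primeCompl N))
    ext x
    have hmk : ∀ (x : M), eM (LocalizedModule.mk x 1) = ιM x := by
      intro y
      have := LinearMap.congr_fun (IsLocalizedModule.iso_symm_comp P.primeCompl ιM) y
      simp only [LinearMap.coe_comp, Function.comp_apply, LinearEquiv.coe_coe,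
        LocalizedModule.mkLinearMap_apply] at this
      rw [← this, LinearEquiv.apply_symm_apply]
    have hmkN : ∀ (y : N), eN.symm (ιN y) = LocalizedModule.mk y 1 := by
      intro y
      have := LinearMap.congr_fun (IsLocalizedModule.iso_symm_comp P.primeCompl ιN) y
      exact this
    simp only [LinearMap.coe_comp, Function.comp_apply, LocalizedModule.mkLinearMap_apply,
      hconjL, LinearMap.coe_mk, AddHom.coe_mk, LinearEquiv.coe_coe, LinearMap.smul_apply]
    rw [hmk x]
    rw [IsLocalizedModule.map_apply]
    rw [show ιN ((g0.restrictScalars R) x) = (s : R) • φ (iot R Λ M P x) from hg x, map_smul]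
    congr 1
    simp [hΨ, hmk x]
    rfl
  -- decomposition of G
  have hGsplit : G = (c0 * (s : R)) • Ψ.toLinearMap + conjL (Fmap F') := by
    rw [hGdef, map_add, map_add, map_smul, map_smul, hkey, mul_smul]
  set H := conjL (Fmap F') with hHdef
  have hHmem : H ∈ P • (⊤ : Submodule R (LM →ₗ[R] LN)) := by
    have key : ∀ T : M →ₗ[R] N, T ∈ P • (⊤ : Submodule R (M →ₗ[R] N)) →
        conjL (Fmap T) ∈ P • (⊤ : Submodule R (LM →ₗ[R] LN)) := by
      intro T hT
      refine Submodule.smul_induction_on hT (fun r hr n _ => ?_) (fun a b ha hb => ?_)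
      · rw [map_smul, map_smul]
        exact Submodule.smul_mem_smul hr Submodule.mem_top
      · rw [map_add, map_add]
        exact Submodule.add_mem _ ha hb
    exact key F' hF'
  haveI : Module.Finite Rₚ LN :=
    Module.Finite.of_isLocalizedModule P.primeCompl (LocalizedModule.mkLinearMap P.primeCompl N)
  haveI : Module.Finite Rₚ LM :=
    Module.Finite.of_isLocalizedModule P.primeCompl (LocalizedModule.mkLinearMap P.primeCompl M)
  set Ψ' : LM ≃ₗ[Rₚ] LN := LinearEquiv.ofLinear
    (Ψ.toLinearMap.extendScalarsOfIsLocalization P.primeCompl Rₚ)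
    (Ψ.symm.toLinearMap.extendScalarsOfIsLocalization P.primeCompl Rₚ)
    (by ext x; simp) (by ext x; simp) with hΨ'
  set G' := G.extendScalarsOfIsLocalization P.primeCompl Rₚ with hG'
  have hHx : ∀ x : LM, H x ∈ (IsLocalRing.maximalIdeal Rₚ) • (⊤ : Submodule Rₚ LN) := by
    have key : ∀ T : LM →ₗ[R] LN, T ∈ P • (⊤ : Submodule R (LM →ₗ[R] LN)) →
        ∀ x : LM, T x ∈ (IsLocalRing.maximalIdeal Rₚ) • (⊤ : Submodule Rₚ LN) := by
      intro T hT
      refine Submodule.smul_induction_on hT (fun r hr n _ => fun x => ?_)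
        (fun a b ha hb x => ?_)
      · rw [LinearMap.smul_apply, ← algebraMap_smul Rₚ r (n x)]
        exact Submodule.smul_mem_smul
          ((IsLocalization.AtPrime.to_map_mem_maximal_iff Rₚ P r).mpr hr) Submodule.mem_top
      · rw [LinearMap.add_apply]
        exact Submodule.add_mem _ (ha x) (hb x)
    exact key H hHmem
  have hcs : c0 * (s : R) ∈ P.primeCompl := mul_mem hc0 s.2
  have hu : IsUnit (algebraMap R Rₚ (c0 * (s : R))) :=
    IsLocalization.map_units Rₚ (⟨_, hcs⟩ : P.primeCompl)
  have hrange : (⊤ : Submodule Rₚ LN) ≤ LinearMap.range G' ⊔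
      (IsLocalRing.maximalIdeal Rₚ) • (⊤ : Submodule Rₚ LN) := by
    intro y _
    set x := Ψ'.symm (hu.unit⁻¹ • y) with hx
    have hGx : G x = y + H x := by
      rw [hGsplit]
      simp only [LinearMap.add_apply, LinearMap.smul_apply]
      congr 1
      rw [← algebraMap_smul Rₚ (c0 * (s : R)) (Ψ.toLinearMap x)]
      rw [show Ψ.toLinearMap x = Ψ' (Ψ'.symm (hu.unit⁻¹ • y)) from rfl,
        LinearEquiv.apply_symm_apply]
      have hrw : ∀ z : LN, (algebraMap R Rₚ) (c0 * (s : R)) • z = hu.unit • z := by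
        intro z
        rw [Units.smul_def, hu.unit_spec]
      rw [hrw]
      exact smul_inv_smul hu.unit y
    have hy : y = G' x - H x := by
      have : G' x = G x := rfl
      rw [this, hGx]; abel
    rw [hy]
    exact Submodule.sub_mem _ (Submodule.mem_sup_left ⟨x, rfl⟩)
      (Submodule.mem_sup_right (hHx x))
  have hfg : (⊤ : Submodule Rₚ LN).FG := Module.finite_def.mp inferInstance
  have htop : (⊤ : Submodule Rₚ LN) ≤ LinearMap.range G' :=
    Submodule.le_of_le_smul_of_le_jacobson_bot hfg
      (IsLocalRing.maximalIdeal_le_jacobson ⊥) hrange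
  have hsurj : Function.Surjective G := by
    intro y
    obtain ⟨x, hx⟩ := htop (Submodule.mem_top (x := y))
    exact ⟨x, hx⟩
  have hesurj : Function.Surjective (Ψ'.symm.toLinearMap ∘ₗ G') := by
    intro y
    obtain ⟨x, hx⟩ := hsurj (Ψ' y)
    exact ⟨x, by simp [hx]; exact congrArg Ψ'.symm hx |>.trans (Ψ'.symm_apply_apply y)⟩
  have heinj : Function.Injective (Ψ'.symm.toLinearMap ∘ₗ G') :=
    OrzechProperty.injective_of_surjective_endomorphism _ hesurj
  have hinj : Function.Injective G := by
    intro a b hab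
    apply heinj
    simp only [LinearMap.coe_comp, Function.comp_apply, LinearEquiv.coe_coe]
    rw [show G' a = G a from rfl, show G' b = G b from rfl, hab]
  exact ⟨hinj, hsurj⟩

end Aux


lemma crt_coeff (R : Type*) [CommRing R] [Finite (MaximalSpectrum R)] :
    ∃ c : MaximalSpectrum R → R, ∀ Q : MaximalSpectrum R,
      c Q ∉ Q.asIdeal ∧ ∀ P : MaximalSpectrum R, P ≠ Q → c Q ∈ P.asIdeal := by
  classical
  haveI := Fintype.ofFinite (MaximalSpectrum R)
  have hx : ∀ Q P : MaximalSpectrum R, P ≠ Q → ∃ x, x ∈ P.asIdeal ∧ x ∉ Q.asIdeal := by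
    intro Q P hne
    by_contra hcon
    push_neg at hcon
    have hle : P.asIdeal ≤ Q.asIdeal := fun x hxP => by
      by_contra hxQ; exact hxQ (hcon x hxP)
    have := P.isMaximal.eq_of_le Q.isMaximal.ne_top hle
    exact hne (MaximalSpectrum.ext this)
  choose x hx1 hx2 using hx
  refine ⟨fun Q => ∏ P ∈ Finset.univ.erase Q, if h : P = Q then 1 else x Q P h, fun Q => ?_⟩
  constructor
  · intro hmem
    rw [show (fun Q => ∏ P ∈ Finset.univ.erase Q, if h : P = Q then 1 else x Q P h) Q
      = ∏ P ∈ Finset.univ.erase Q, (if h : P = Q then 1 else x Q P h) from rfl,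
      Ideal.IsPrime.prod_mem_iff] at hmem
    obtain ⟨P, hP, hPm⟩ := hmem
    rw [dif_neg (Finset.ne_of_mem_erase hP)] at hPm
    exact hx2 Q P (Finset.ne_of_mem_erase hP) hPm
  · intro P hne
    have hPmem : P ∈ Finset.univ.erase Q := Finset.mem_erase.mpr ⟨hne, Finset.mem_univ P⟩
    show (∏ P' ∈ Finset.univ.erase Q, if h : P' = Q then 1 else x Q P' h) ∈ P.asIdeal
    obtain ⟨u, hu⟩ := Finset.dvd_prod_of_mem
      (fun P' => if h : P' = Q then 1 else x Q P' h) hPmem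
    rw [hu, dif_neg hne]
    exact Ideal.mul_mem_right _ _ (hx1 Q P hne)


/-- Let `R` be a commutative semilocal domain (only finitely many maximal
ideals) and `Λ` a module-finite `R`-algebra.  Let `M`, `N` be finitely generated
`Λ`-modules which are torsion-free as `R`-modules.  Then `M ≅ N` as `Λ`-modules if and only
if `M_𝔪 ≅ N_𝔪` for every maximal ideal `𝔪` of `R`.  (A `Λ`-linear isomorphism between
the localized modules is the same thing as a `Λ_𝔪`-linear isomorphism.) -/
theorem stmt7 (R : Type u) [CommRing R] [IsDomain R]
    (hsemilocal : {I : Ideal R | I.IsMaximal}.Finite)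
    (Λ : Type u) [Ring Λ] [Algebra R Λ] [Module.Finite R Λ]
    (M : Type u) [AddCommGroup M] [Module R M] [Module Λ M] [IsScalarTower R Λ M]
    [Module.Finite Λ M] [NoZeroSMulDivisors R M]
    (N : Type u) [AddCommGroup N] [Module R N] [Module Λ N] [IsScalarTower R Λ N]
    [Module.Finite Λ N] [NoZeroSMulDivisors R N] :
    Nonempty (M ≃ₗ[Λ] N) ↔
      ∀ 𝔪 : MaximalSpectrum R,
        Nonempty ((M ⊗[R] Localization.AtPrime 𝔪.asIdeal) ≃ₗ[Λ]
          (N ⊗[R] Localization.AtPrime 𝔪.asIdeal)) := by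
  classical
  constructor
  · rintro ⟨e⟩ 𝔪
    exact ⟨TensorProduct.AlgebraTensorModule.congr e (LinearEquiv.refl R _)⟩
  · intro h
    haveI : Module.Finite R M := Module.Finite.trans Λ M
    haveI : Module.Finite R N := Module.Finite.trans Λ N
    haveI : Finite (MaximalSpectrum R) := by
      haveI := hsemilocal.to_subtype
      exact Finite.of_injective
        (fun 𝔪 : MaximalSpectrum R =>
          (⟨𝔪.asIdeal, 𝔪.isMaximal⟩ : {I : Ideal R // I ∈ {I : Ideal R | I.IsMaximal}}))
        (fun a b hab => MaximalSpectrum.ext (congrArg Subtype.val hab))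
    haveI := Fintype.ofFinite (MaximalSpectrum R)
    choose g s hg using fun 𝔪 : MaximalSpectrum R =>
      exists_clear R Λ M N 𝔪.asIdeal (h 𝔪).some
    obtain ⟨c, hc⟩ := crt_coeff R
    set f : M →ₗ[Λ] N := ∑ 𝔪 : MaximalSpectrum R, c 𝔪 • g 𝔪 with hf
    have hbij : Function.Bijective (f.restrictScalars R) := by
      apply bijective_of_isLocalized_maximal
        (fun P _ => M ⊗[R] Localization.AtPrime P)
        (fun P _ => (iot R Λ M P).restrictScalars R)
        (fun P _ => N ⊗[R] Localization.AtPrime P)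
        (fun P _ => (iot R Λ N P).restrictScalars R)
      intro P hP
      set 𝔭 : MaximalSpectrum R := ⟨P, hP⟩ with h𝔭
      set F' : M →ₗ[R] N :=
        ∑ 𝔪 ∈ Finset.univ.erase 𝔭, c 𝔪 • (g 𝔪).restrictScalars R with hF'
      have hsplit : f.restrictScalars R = c 𝔭 • (g 𝔭).restrictScalars R + F' := by
        have h1 : f.restrictScalars R =
            ∑ 𝔪 : MaximalSpectrum R, c 𝔪 • (g 𝔪).restrictScalars R := by
          ext x
          simp [hf, LinearMap.sum_apply]
        rw [h1, hF', ← Finset.add_sum_erase _ _ (Finset.mem_univ 𝔭)]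
      have hF'mem : F' ∈ P • (⊤ : Submodule R (M →ₗ[R] N)) := by
        rw [hF']
        refine Submodule.sum_mem _ (fun 𝔪 h𝔪 => ?_)
        exact Submodule.smul_mem_smul ((hc 𝔪).2 𝔭 (Finset.ne_of_mem_erase h𝔪).symm)
          Submodule.mem_top
      rw [hsplit]
      exact local_bij R Λ M N P ((h 𝔭).some) (g 𝔭) (s 𝔭) (hg 𝔭) (c 𝔭) (hc 𝔭).1 F' hF'mem
    exact ⟨LinearEquiv.ofBijective f hbij⟩
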